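/- The Pairing axiom holds in the implicative model: there exists t ∈ Σ with t ≤ ⋀_{α,β∈W} ⟆∃_{γ∈W}((α ∈_W γ) × (β ∈_W γ)). Concretely, taking γ := η_{α,β} the partial function with domain {α, β} and constant value ⊤, the term e(p(e(p ⊤ ρ))(e(p ⊤ ρ))) works. -/
import Mathlib


universe u v

/-- An implicative algebra: a complete lattice with an implication antitone in the
first argument, monotone in the second, distributing over arbitrary meets in the
second argument, together with a separator `Sep` which is upward closed, closed
under modus ponens, and contains the combinators K and S. -/
structure ImplicativeAlgebra (A : Type u) [CompleteLattice A] where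
  imp : A → A → A
  imp_anti : ∀ ⦃a a' b : A⦄, a ≤ a' → imp a' b ≤ imp a b
  imp_mono : ∀ ⦃a b b' : A⦄, b ≤ b' → imp a b ≤ imp a b'
  imp_sInf : ∀ (a : A) (S : Set A), imp a (sInf S) = ⨅ b ∈ S, imp a b
  Sep : Set A
  sep_upward : ∀ ⦃a b : A⦄, a ∈ Sep → a ≤ b → b ∈ Sep
  sep_mp : ∀ ⦃a b : A⦄, imp a b ∈ Sep → a ∈ Sep → b ∈ Sep
  sep_K : (⨅ a : A, ⨅ b : A, imp a (imp b a)) ∈ Sep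
  sep_S : (⨅ a : A, ⨅ b : A, ⨅ c : A,
      imp (imp a (imp b c)) (imp (imp a b) (imp a c))) ∈ Sep

namespace ImplicativeAlgebra

variable {A : Type u} [CompleteLattice A] (𝔸 : ImplicativeAlgebra A)

/-- Application: `a · b := ⋀ {x | a ≤ b → x}`. -/
def app (a b : A) : A := sInf {x : A | a ≤ 𝔸.imp b x}

/-- Implicative conjunction `a × b`. -/
def itimes (a b : A) : A := ⨅ x : A, 𝔸.imp (𝔸.imp a (𝔸.imp b x)) x

/-- Implicative disjunction `a + b`. -/
def iplus (a b : A) : A := ⨅ x : A, 𝔸.imp (𝔸.imp a x) (𝔸.imp (𝔸.imp b x) x)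

/-- Second-order encoding of the existential quantifier. -/
def iexists {ι : Sort v} (f : ι → A) : A := ⨅ x : A, 𝔸.imp (⨅ i, 𝔸.imp (f i) x) x

/-- Encoding of k = λx.λy.x. -/
def kComb : A := ⨅ a : A, 𝔸.imp a (⨅ b : A, 𝔸.imp b a)

/-- Encoding of λx.λy.y. -/
def kbarComb : A := ⨅ a : A, 𝔸.imp a (⨅ b : A, 𝔸.imp b b)

/-- Encoding of the pairing combinator p = λx.λy.λz.zxy. -/
def pComb : A := ⨅ a : A, 𝔸.imp a (⨅ b : A, 𝔸.imp b (⨅ c : A, 𝔸.imp c (𝔸.app (𝔸.app c a) b)))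

/-- Encoding of the first projection p₁ = λu.u k. -/
def p1Comb : A := ⨅ u : A, 𝔸.imp u (𝔸.app u 𝔸.kComb)

/-- Encoding of the second projection p₂ = λv.v k̄. -/
def p2Comb : A := ⨅ u : A, 𝔸.imp u (𝔸.app u 𝔸.kbarComb)

/-- Encoding of the existential-introduction combinator e = λx.λz.zx. -/
def eComb : A := ⨅ a : A, 𝔸.imp a (⨅ c : A, 𝔸.imp c (𝔸.app c a))

end ImplicativeAlgebra

/-- Names of the implicative model of set theory: a name is a (set-indexed)
family of previously constructed names, each labelled by a truth value in `A`
(a partial function from names to `A`, presented as a family). -/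
inductive Name (A : Type u) : Type (u + 1)
  | mk (ι : Type u) (elem : ι → Name A) (val : ι → A) : Name A

namespace Name

/-- The (index set of the) domain of a name. -/
def idx {A : Type u} : Name A → Type u
  | .mk ι _ _ => ι

/-- The elements of the domain of a name. -/
def elem {A : Type u} : (α : Name A) → α.idx → Name A
  | .mk _ e _ => e

/-- The truth value attached to each element of the domain of a name. -/
def val {A : Type u} : (α : Name A) → α.idx → A
  | .mk _ _ v => v

variable {A : Type u} [CompleteLattice A]

/-- `eqPair 𝔸 α β = (α ⊆_W β, β ⊆_W α)`, defined by simultaneous recursion,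
where `α ⊆_W β := ⋀_{t ∈ dom α}(α(t) → t ∈_W β)` and
`t ∈_W β := ∃_{u ∈ dom β}(β(u) × (u =_W t))` and `u =_W t := (u ⊆_W t) × (t ⊆_W u)`. -/
def eqPair (𝔸 : ImplicativeAlgebra A) : Name A → Name A → A × A
  | .mk _ e v, .mk _ e' v' =>
    (⨅ i, 𝔸.imp (v i) (𝔸.iexists fun j => 𝔸.itimes (v' j)
        (𝔸.itimes (eqPair 𝔸 (e i) (e' j)).2 (eqPair 𝔸 (e i) (e' j)).1)),
     ⨅ j, 𝔸.imp (v' j) (𝔸.iexists fun i => 𝔸.itimes (v i)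
        (𝔸.itimes (eqPair 𝔸 (e i) (e' j)).1 (eqPair 𝔸 (e i) (e' j)).2)))

/-- `α ⊆_W β`. -/
def subW (𝔸 : ImplicativeAlgebra A) (α β : Name A) : A := (eqPair 𝔸 α β).1

/-- `α =_W β := (α ⊆_W β) × (β ⊆_W α)`. -/
def eqW (𝔸 : ImplicativeAlgebra A) (α β : Name A) : A :=
  𝔸.itimes (eqPair 𝔸 α β).1 (eqPair 𝔸 α β).2

/-- `α ∈_W β := ∃_{t ∈ dom β}(β(t) × (t =_W α))`. -/
def memW (𝔸 : ImplicativeAlgebra A) (α β : Name A) : A :=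
  𝔸.iexists fun j : β.idx => 𝔸.itimes (β.val j) (eqW 𝔸 (β.elem j) α)

end Name

namespace ImplicativeAlgebra

variable {A : Type u} [CompleteLattice A] (𝔸 : ImplicativeAlgebra A)

lemma le_imp_app (t b : A) : t ≤ 𝔸.imp b (𝔸.app t b) := by
  rw [app, imp_sInf]
  exact le_iInf fun x => le_iInf fun hx => hx

lemma app_le_iff {t b x : A} : 𝔸.app t b ≤ x ↔ t ≤ 𝔸.imp b x :=
  ⟨fun h => (𝔸.le_imp_app t b).trans (𝔸.imp_mono h), fun h => sInf_le h⟩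

lemma app_mono {a a' b b' : A} (ha : a ≤ a') (hb : b ≤ b') :
    𝔸.app a b ≤ 𝔸.app a' b' :=
  𝔸.app_le_iff.2 (ha.trans ((𝔸.le_imp_app a' b').trans (𝔸.imp_anti hb)))

lemma app_sep {a b : A} (ha : a ∈ 𝔸.Sep) (hb : b ∈ 𝔸.Sep) : 𝔸.app a b ∈ 𝔸.Sep :=
  𝔸.sep_mp (𝔸.sep_upward ha (𝔸.le_imp_app a b)) hb

/-- The K combinator element. -/
def KT : A := ⨅ a : A, ⨅ b : A, 𝔸.imp a (𝔸.imp b a)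

/-- The S combinator element. -/
def ST : A := ⨅ a : A, ⨅ b : A, ⨅ c : A,
  𝔸.imp (𝔸.imp a (𝔸.imp b c)) (𝔸.imp (𝔸.imp a b) (𝔸.imp a c))

lemma KT_sep : 𝔸.KT ∈ 𝔸.Sep := 𝔸.sep_K

lemma ST_sep : 𝔸.ST ∈ 𝔸.Sep := 𝔸.sep_S

lemma top_sep : (⊤ : A) ∈ 𝔸.Sep := 𝔸.sep_upward 𝔸.sep_K le_top

lemma app_K (a b : A) : 𝔸.app (𝔸.app 𝔸.KT a) b ≤ a := by
  refine 𝔸.app_le_iff.2 (𝔸.app_le_iff.2 ?_)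
  exact (iInf_le _ a).trans (iInf_le _ b)

lemma app_S (f g x : A) :
    𝔸.app (𝔸.app (𝔸.app 𝔸.ST f) g) x ≤ 𝔸.app (𝔸.app f x) (𝔸.app g x) := by
  refine 𝔸.app_le_iff.2 (𝔸.app_le_iff.2 (𝔸.app_le_iff.2 ?_))
  have h1 : 𝔸.ST ≤ 𝔸.imp (𝔸.imp x (𝔸.imp (𝔸.app g x) (𝔸.app (𝔸.app f x) (𝔸.app g x))))
      (𝔸.imp (𝔸.imp x (𝔸.app g x)) (𝔸.imp x (𝔸.app (𝔸.app f x) (𝔸.app g x)))) :=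
    (iInf_le _ x).trans ((iInf_le _ (𝔸.app g x)).trans (iInf_le _ _))
  have hf : f ≤ 𝔸.imp x (𝔸.imp (𝔸.app g x) (𝔸.app (𝔸.app f x) (𝔸.app g x))) :=
    (𝔸.le_imp_app f x).trans (𝔸.imp_mono (𝔸.le_imp_app _ _))
  exact (h1.trans (𝔸.imp_anti hf)).trans (𝔸.imp_mono (𝔸.imp_anti (𝔸.le_imp_app g x)))

/-- The I combinator. -/
def IT : A := 𝔸.app (𝔸.app 𝔸.ST 𝔸.KT) 𝔸.KT

lemma app_I (x : A) : 𝔸.app 𝔸.IT x ≤ x :=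
  (𝔸.app_S _ _ _).trans (𝔸.app_K _ _)

lemma IT_sep : 𝔸.IT ∈ 𝔸.Sep := 𝔸.app_sep (𝔸.app_sep 𝔸.ST_sep 𝔸.KT_sep) 𝔸.KT_sep

/-- `M x := S·I·(K·x)`, satisfying `M x · z ≤ z·x`. -/
def MT (x : A) : A := 𝔸.app (𝔸.app 𝔸.ST 𝔸.IT) (𝔸.app 𝔸.KT x)

lemma M_spec (x z : A) : 𝔸.app (𝔸.MT x) z ≤ 𝔸.app z x :=
  (𝔸.app_S _ _ _).trans (𝔸.app_mono (𝔸.app_I z) (𝔸.app_K x z))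

/-- `W := S·(K·K)·I`, satisfying `W·y ≤ K·y`. -/
def WT : A := 𝔸.app (𝔸.app 𝔸.ST (𝔸.app 𝔸.KT 𝔸.KT)) 𝔸.IT

lemma W_spec (y : A) : 𝔸.app 𝔸.WT y ≤ 𝔸.app 𝔸.KT y :=
  (𝔸.app_S _ _ _).trans (𝔸.app_mono (𝔸.app_K _ _) (𝔸.app_I y))

lemma WT_sep : 𝔸.WT ∈ 𝔸.Sep :=
  𝔸.app_sep (𝔸.app_sep 𝔸.ST_sep (𝔸.app_sep 𝔸.KT_sep 𝔸.KT_sep)) 𝔸.IT_sep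

/-- `E := S·(K·(S·I))·W`, a combinatory term realizing `e = λx.λz.zx`. -/
def ET : A := 𝔸.app (𝔸.app 𝔸.ST (𝔸.app 𝔸.KT (𝔸.app 𝔸.ST 𝔸.IT))) 𝔸.WT

lemma E_spec (x : A) : 𝔸.app 𝔸.ET x ≤ 𝔸.MT x :=
  (𝔸.app_S _ _ _).trans (𝔸.app_mono (𝔸.app_K _ _) (𝔸.W_spec x))

lemma E_spec2 (x z : A) : 𝔸.app (𝔸.app 𝔸.ET x) z ≤ 𝔸.app z x :=
  (𝔸.app_mono (𝔸.E_spec x) le_rfl).trans (𝔸.M_spec x z)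

lemma ET_sep : 𝔸.ET ∈ 𝔸.Sep :=
  𝔸.app_sep (𝔸.app_sep 𝔸.ST_sep (𝔸.app_sep 𝔸.KT_sep (𝔸.app_sep 𝔸.ST_sep 𝔸.IT_sep)))
    𝔸.WT_sep

lemma ET_le_eComb : 𝔸.ET ≤ 𝔸.eComb := by
  refine le_iInf fun a => 𝔸.app_le_iff.1 (le_iInf fun c => 𝔸.app_le_iff.1 ?_)
  exact 𝔸.app_le_iff.2 (𝔸.app_le_iff.1 (𝔸.E_spec2 a c))

lemma eComb_sep : 𝔸.eComb ∈ 𝔸.Sep := 𝔸.sep_upward 𝔸.ET_sep 𝔸.ET_le_eComb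

/-- `P`, a combinatory term realizing `p = λx.λy.λz.zxy`. -/
def PT : A :=
  𝔸.app (𝔸.app 𝔸.ST (𝔸.app (𝔸.app 𝔸.ST (𝔸.app 𝔸.KT 𝔸.ST))
      (𝔸.app (𝔸.app 𝔸.ST (𝔸.app 𝔸.KT 𝔸.KT)) (𝔸.app (𝔸.app 𝔸.ST (𝔸.app 𝔸.KT 𝔸.ST)) 𝔸.ET))))
    (𝔸.app 𝔸.KT 𝔸.WT)

lemma PT_sep : 𝔸.PT ∈ 𝔸.Sep := by
  have hK := 𝔸.KT_sep; have hS := 𝔸.ST_sep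
  exact 𝔸.app_sep (𝔸.app_sep hS (𝔸.app_sep (𝔸.app_sep hS (𝔸.app_sep hK hS))
      (𝔸.app_sep (𝔸.app_sep hS (𝔸.app_sep hK hK))
        (𝔸.app_sep (𝔸.app_sep hS (𝔸.app_sep hK hS)) 𝔸.ET_sep))))
    (𝔸.app_sep hK 𝔸.WT_sep)

lemma P_spec1 (x : A) :
    𝔸.app 𝔸.PT x ≤ 𝔸.app (𝔸.app 𝔸.ST (𝔸.app 𝔸.KT (𝔸.app 𝔸.ST (𝔸.MT x)))) 𝔸.WT := by
  refine (𝔸.app_S _ _ _).trans (𝔸.app_mono ?_ (𝔸.app_K _ _))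
  refine (𝔸.app_S _ _ _).trans (𝔸.app_mono (𝔸.app_K _ _) ?_)
  refine (𝔸.app_S _ _ _).trans (𝔸.app_mono (𝔸.app_K _ _) ?_)
  exact (𝔸.app_S _ _ _).trans (𝔸.app_mono (𝔸.app_K _ _) (𝔸.E_spec x))

lemma P_spec2 (x y : A) :
    𝔸.app (𝔸.app 𝔸.PT x) y ≤ 𝔸.app (𝔸.app 𝔸.ST (𝔸.MT x)) (𝔸.app 𝔸.KT y) :=
  ((𝔸.app_mono (𝔸.P_spec1 x) le_rfl).trans (𝔸.app_S _ _ _)).trans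
    (𝔸.app_mono (𝔸.app_K _ _) (𝔸.W_spec y))

lemma P_spec3 (x y z : A) :
    𝔸.app (𝔸.app (𝔸.app 𝔸.PT x) y) z ≤ 𝔸.app (𝔸.app z x) y :=
  ((𝔸.app_mono (𝔸.P_spec2 x y) le_rfl).trans (𝔸.app_S _ _ _)).trans
    (𝔸.app_mono (𝔸.M_spec x z) (𝔸.app_K y z))

lemma PT_le_pComb : 𝔸.PT ≤ 𝔸.pComb := by
  refine le_iInf fun a => 𝔸.app_le_iff.1 (le_iInf fun b => 𝔸.app_le_iff.1
    (le_iInf fun c => 𝔸.app_le_iff.1 ?_))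
  exact 𝔸.app_le_iff.2 (𝔸.app_le_iff.1 (𝔸.P_spec3 a b c))

lemma pComb_sep : 𝔸.pComb ∈ 𝔸.Sep := 𝔸.sep_upward 𝔸.PT_sep 𝔸.PT_le_pComb

lemma itimes_mono {a a' b b' : A} (ha : a ≤ a') (hb : b ≤ b') :
    𝔸.itimes a b ≤ 𝔸.itimes a' b' :=
  iInf_mono fun x => 𝔸.imp_anti ((𝔸.imp_anti ha).trans (𝔸.imp_mono (𝔸.imp_anti hb)))

lemma app_pair_le (a b : A) : 𝔸.app (𝔸.app 𝔸.pComb a) b ≤ 𝔸.itimes a b := by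
  refine 𝔸.app_le_iff.2 (𝔸.app_le_iff.2 ?_)
  refine (iInf_le _ a).trans ((𝔸.imp_mono (iInf_le _ b)).trans (𝔸.imp_mono (𝔸.imp_mono ?_)))
  refine le_iInf fun x => (iInf_le _ (𝔸.imp a (𝔸.imp b x))).trans (𝔸.imp_mono ?_)
  exact 𝔸.app_le_iff.2 (𝔸.app_le_iff.2 le_rfl)

lemma app_e_le {ι : Sort v} (f : ι → A) (i : ι) {x : A} (h : x ≤ f i) :
    𝔸.app 𝔸.eComb x ≤ 𝔸.iexists f := by
  refine 𝔸.app_le_iff.2 ((iInf_le _ x).trans (𝔸.imp_mono ?_))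
  refine le_iInf fun y => (iInf_le _ (⨅ i, 𝔸.imp (f i) y)).trans (𝔸.imp_mono ?_)
  exact 𝔸.app_le_iff.2 ((iInf_le _ i).trans (𝔸.imp_anti h))

end ImplicativeAlgebra

/-- The name `η_{α,β}` with domain `{α, β}` and constant value `⊤`. -/
def Name.pairName {A : Type u} [CompleteLattice A] (α β : Name A) : Name A :=
  .mk (ULift Bool) (fun j => if j.down then α else β) (fun _ => (⊤ : A))

/-- the Pairing axiom holds in the implicative model: the term
e(p(e(p ⊤ ρ))(e(p ⊤ ρ))) belongs to Σ and realizes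
⋀_{α,β∈W} ∃_{γ∈W}((α ∈_W γ) × (β ∈_W γ)). -/
theorem pairing_realized {A : Type u} [CompleteLattice A]
    (𝔸 : ImplicativeAlgebra A) (ρ : A) (hρSep : ρ ∈ 𝔸.Sep)
    (hρ : ρ ≤ ⨅ α : Name A, Name.eqW 𝔸 α α) :
    𝔸.app 𝔸.eComb
        (𝔸.app (𝔸.app 𝔸.pComb (𝔸.app 𝔸.eComb (𝔸.app (𝔸.app 𝔸.pComb ⊤) ρ)))
          (𝔸.app 𝔸.eComb (𝔸.app (𝔸.app 𝔸.pComb ⊤) ρ))) ∈ 𝔸.Sep ∧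
      𝔸.app 𝔸.eComb
          (𝔸.app (𝔸.app 𝔸.pComb (𝔸.app 𝔸.eComb (𝔸.app (𝔸.app 𝔸.pComb ⊤) ρ)))
            (𝔸.app 𝔸.eComb (𝔸.app (𝔸.app 𝔸.pComb ⊤) ρ))) ≤
        ⨅ α : Name A, ⨅ β : Name A,
          𝔸.iexists fun γ : Name A =>
            𝔸.itimes (Name.memW 𝔸 α γ) (Name.memW 𝔸 β γ) := by
  have hq : 𝔸.app (𝔸.app 𝔸.pComb ⊤) ρ ∈ 𝔸.Sep :=
    𝔸.app_sep (𝔸.app_sep 𝔸.pComb_sep 𝔸.top_sep) hρSep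
  constructor
  · exact 𝔸.app_sep 𝔸.eComb_sep (𝔸.app_sep
      (𝔸.app_sep 𝔸.pComb_sep (𝔸.app_sep 𝔸.eComb_sep hq))
      (𝔸.app_sep 𝔸.eComb_sep hq))
  · refine le_iInf fun α => le_iInf fun β => ?_
    set q := 𝔸.app 𝔸.eComb (𝔸.app (𝔸.app 𝔸.pComb ⊤) ρ) with hqdef
    have hmem : ∀ (δ : Name A) (j : ULift Bool),
        (if j.down then α else β) = δ → q ≤ Name.memW 𝔸 δ (Name.pairName α β) := by
      intro δ j hj
      refine 𝔸.app_e_le (f := fun j : ULift Bool =>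
        𝔸.itimes ((⊤ : A)) (Name.eqW 𝔸 (if j.down then α else β) δ)) j ?_
      refine (𝔸.app_pair_le ⊤ ρ).trans (𝔸.itimes_mono le_rfl ?_)
      rw [hj]
      exact hρ.trans (iInf_le _ δ)
    have hα : q ≤ Name.memW 𝔸 α (Name.pairName α β) := hmem α ⟨true⟩ rfl
    have hβ : q ≤ Name.memW 𝔸 β (Name.pairName α β) := hmem β ⟨false⟩ rfl
    refine 𝔸.app_e_le (f := fun γ : Name A =>
      𝔸.itimes (Name.memW 𝔸 α γ) (Name.memW 𝔸 β γ)) (Name.pairName α β) ?_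
    exact (𝔸.app_pair_le q q).trans (𝔸.itimes_mono hα hβ)
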